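/- Let k be an infinite field, n a natural number, and a : Fin n → ℤ weights with a i ≠ 0 for all i. Let τ be a polynomial over k in the variables X 0, …, X (n−1) and an additional variable w (i.e. τ ∈ Polynomial (MvPolynomial (Fin n) k), with w the outer variable). Say τ is antidiagonally invariant if for every g ∈ kˣ, the k-algebra substitution sending X i to g^{a i} • X i (ℤ-power in kˣ) and w to g⁻¹ • w fixes τ. Assume τ is antidiagonally invariant and that the coefficient of w⁰ in τ has zero constant term (as a multivariate polynomial in the X i). Then for every x : Fin n → k with x i = 0 for all i with a i > 0, and for every w₀ ∈ k, the evaluation of τ at (x, w₀) is zero. -/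
import Mathlib


/-- Over an infinite field `k`, with nonzero weights `a i`, let
`τ ∈ Polynomial (MvPolynomial (Fin n) k)` (outer variable `w`) be antidiagonally
invariant: for every `g ∈ kˣ` the `k`-algebra substitution `X i ↦ g ^ (a i) • X i`,
`w ↦ g⁻¹ • w` fixes `τ`.  Assume the coefficient of `w⁰` in `τ` has zero constant term.
Then `τ` vanishes at `(x, w₀)` for every `x` with `x i = 0` for all `i` with `a i > 0`
and every `w₀ ∈ k`. -/
theorem invariant_section_vanishes_type_iii (k : Type*) [Field k] [Infinite k] (n : ℕ)
    (a : Fin n → ℤ) (ha : ∀ i, a i ≠ 0)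
    (τ : Polynomial (MvPolynomial (Fin n) k))
    (hinv : ∀ g : kˣ,
      Polynomial.eval₂
        ((Polynomial.C : MvPolynomial (Fin n) k →+* Polynomial (MvPolynomial (Fin n) k)).comp
          (MvPolynomial.aeval
            (fun i => ((g ^ a i : kˣ) : k) •
              (MvPolynomial.X i : MvPolynomial (Fin n) k))).toRingHom)
        (((g⁻¹ : kˣ) : k) • (Polynomial.X : Polynomial (MvPolynomial (Fin n) k))) τ = τ)
    (hconst : MvPolynomial.constantCoeff (τ.coeff 0) = 0)
    (x : Fin n → k) (hx : ∀ i, 0 < a i → x i = 0) (w₀ : k) :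
    Polynomial.eval₂ (MvPolynomial.eval x) w₀ τ = 0 := by
  set c : k := Polynomial.eval₂ (MvPolynomial.eval x) w₀ τ with hc
  set φ : MvPolynomial (Fin n) k →+* Polynomial k :=
    MvPolynomial.eval₂Hom Polynomial.C
      (fun i => Polynomial.C (x i) * Polynomial.X ^ (-(a i)).toNat) with hφ
  set Q : Polynomial k := Polynomial.eval₂ φ (Polynomial.C w₀ * Polynomial.X) τ with hQ
  have hQeval : ∀ h : k, Q.eval h =
      Polynomial.eval₂ (MvPolynomial.eval (fun i => x i * h ^ (-(a i)).toNat)) (w₀ * h) τ := by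
    intro h
    have e0 : Q.eval h = (Polynomial.evalRingHom h) Q := rfl
    rw [e0, hQ, Polynomial.hom_eval₂]
    congr 1
    · apply MvPolynomial.ringHom_ext
      · intro r; simp [hφ]
      · intro i; simp [hφ]
    · simp
  have key : ∀ h : k, h ≠ 0 → Q.eval h = c := by
    intro h hh
    set g : kˣ := (Units.mk0 h hh)⁻¹ with hg
    have hinvg := hinv g
    have h1 := congrArg (Polynomial.eval₂RingHom (MvPolynomial.eval x) w₀) hinvg
    rw [Polynomial.hom_eval₂] at h1
    have h2 : (Polynomial.eval₂RingHom (MvPolynomial.eval x) w₀) τ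
        = Polynomial.eval₂ (MvPolynomial.eval x) w₀ τ := rfl
    rw [hQeval h, hc, ← h2, ← h1]
    congr 1
    · apply MvPolynomial.ringHom_ext
      · intro r; simp
      · intro i
        simp only [RingHom.comp_apply, AlgHom.toRingHom_eq_coe, RingHom.coe_coe,
          Polynomial.coe_eval₂RingHom, Polynomial.eval₂_C, MvPolynomial.aeval_X,
          MvPolynomial.smul_eval, MvPolynomial.eval_X]
        rcases lt_or_gt_of_ne (ha i) with hneg | hpos
        · have hg' : ((g ^ a i : kˣ) : k) = h ^ (-(a i)).toNat := by
            have e1 : g ^ a i = (Units.mk0 h hh) ^ (-(a i)).toNat := by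
              rw [hg, ← zpow_natCast, Int.toNat_of_nonneg (by omega), inv_zpow, ← zpow_neg]
            rw [e1, Units.val_pow_eq_pow_val, Units.val_mk0]
          rw [hg']; ring
        · rw [hx i hpos]; ring
    · have e2 : (((g⁻¹ : kˣ) : k) • (Polynomial.X : Polynomial (MvPolynomial (Fin n) k)))
          = Polynomial.C (MvPolynomial.C ((g⁻¹ : kˣ) : k)) * Polynomial.X := by
        rw [Algebra.smul_def]; rfl
      rw [e2]
      symm
      show Polynomial.eval₂ (MvPolynomial.eval x) w₀ _ = w₀ * h
      rw [Polynomial.eval₂_mul, Polynomial.eval₂_C, Polynomial.eval₂_X, MvPolynomial.eval_C]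
      rw [hg, inv_inv, Units.val_mk0, mul_comm]
  have hQc : Q = Polynomial.C c := by
    have hz : (Q - Polynomial.C c) = 0 := by
      apply Polynomial.eq_zero_of_infinite_isRoot
      have hinf : ({(0 : k)}ᶜ : Set k).Infinite :=
        Set.Finite.infinite_compl (Set.finite_singleton 0)
      apply hinf.mono
      intro y hy
      have : y ≠ 0 := by simpa using hy
      simp [Polynomial.IsRoot, key y this]
    have := sub_eq_zero.mp hz
    exact this
  have hQ0 : Q.eval 0 = 0 := by
    rw [hQeval 0, mul_zero, Polynomial.eval₂_at_zero]
    have hpt : (fun i => x i * (0 : k) ^ (-(a i)).toNat) = fun _ => 0 := by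
      funext i
      rcases lt_or_gt_of_ne (ha i) with hneg | hpos
      · rw [zero_pow (by omega), mul_zero]
      · rw [hx i hpos, zero_mul]
    rw [hpt]
    have := congrFun (congrArg DFunLike.coe (MvPolynomial.eval_zero' (R := k) (σ := Fin n)))
      (τ.coeff 0)
    rw [this, hconst]
  rw [hQc] at hQ0
  simpa using hQ0
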